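/- Let Ω ⊆ ℝ be an open interval, let f : ℝ → ℝ be continuously differentiable on Ω, let t0 < T be real numbers, and let y : [t0, T] → Ω be differentiable with y'(t) = f(y(t)) for all t ∈ [t0, T]. If f(y(t0)) > 0, then y is strictly monotone increasing on [t0, T]; if f(y(t0)) < 0, then y is strictly monotone decreasing on [t0, T]. -/

import Mathlib

open Set

theorem stmt14 (Ω : Set ℝ) (hΩopen : IsOpen Ω) (hΩconn : Ω.OrdConnected)
    (f : ℝ → ℝ) (hf : ContDiffOn ℝ 1 f Ω)
    (t0 T : ℝ) (htT : t0 < T) (y : ℝ → ℝ)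
    (hmem : ∀ t ∈ Set.Icc t0 T, y t ∈ Ω)
    (hy : ∀ t ∈ Set.Icc t0 T, HasDerivWithinAt y (f (y t)) (Set.Icc t0 T) t) :
    (0 < f (y t0) → StrictMonoOn y (Set.Icc t0 T)) ∧
    (f (y t0) < 0 → StrictAntiOn y (Set.Icc t0 T)) := by
  set g : ℝ → ℝ := fun t => f (y t) with hg
  -- the function a t = f'(y t)
  set a : ℝ → ℝ := fun t => deriv f (y t) with ha
  -- clamp into [t0, T]
  set c : ℝ → ℝ := fun t => min (max t t0) T with hc
  have hcmem : ∀ t, c t ∈ Icc t0 T := fun t =>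
    ⟨le_min (le_max_right _ _) htT.le, min_le_right _ _⟩
  have hcid : ∀ t ∈ Icc t0 T, c t = t := by
    intro t ht
    simp [hc, max_eq_left ht.1, min_eq_left ht.2]
  -- continuity of y on Icc
  have hycont : ContinuousOn y (Icc t0 T) := fun t ht => (hy t ht).continuousWithinAt
  -- f is differentiable at y t for t ∈ Icc
  have hfd : ∀ t ∈ Icc t0 T, HasDerivAt f (a t) (y t) := by
    intro t ht
    exact ((hf.differentiableOn one_ne_zero).differentiableAt
      (hΩopen.mem_nhds (hmem t ht))).hasDerivAt
  -- g has derivative a t * g t within Icc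
  have hgderiv : ∀ t ∈ Icc t0 T, HasDerivWithinAt g (a t * g t) (Icc t0 T) t := by
    intro t ht
    exact (hfd t ht).comp_hasDerivWithinAt t (hy t ht)
  have hgcont : ContinuousOn g (Icc t0 T) :=
    (hf.continuousOn.comp hycont fun t ht => hmem t ht)
  -- a is continuous on Icc, hence bounded
  have hacont : ContinuousOn a (Icc t0 T) :=
    (hf.continuousOn_deriv_of_isOpen hΩopen le_rfl).comp hycont fun t ht => hmem t ht
  obtain ⟨C, hC⟩ := (isCompact_Icc).exists_bound_of_continuousOn hacont
  set K : NNReal := C.toNNReal with hK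
  have hKC : ∀ t ∈ Icc t0 T, |a t| ≤ (K : ℝ) := by
    intro t ht
    calc |a t| = ‖a t‖ := rfl
    _ ≤ C := hC t ht
    _ ≤ (K : ℝ) := Real.le_coe_toNNReal C
  -- the vector field
  set v : ℝ → ℝ → ℝ := fun t x => a (c t) * x with hv
  have hvlip : ∀ t, LipschitzOnWith K (v t) univ := by
    intro t
    apply LipschitzWith.lipschitzOnWith
    apply LipschitzWith.of_dist_le_mul
    intro x z
    simp only [hv, Real.dist_eq, ← mul_sub, abs_mul]
    exact mul_le_mul_of_nonneg_right (hKC _ (hcmem t)) (abs_nonneg _)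
  -- key: g never vanishes if g t0 ≠ 0
  have hnz : g t0 ≠ 0 → ∀ t ∈ Icc t0 T, g t ≠ 0 := by
    intro h0 s hs hgs
    rcases eq_or_lt_of_le hs.1 with rfl | hlt
    · exact h0 hgs
    -- apply uniqueness backwards on [t0, s]
    have key : EqOn g (fun _ => (0 : ℝ)) (Icc t0 s) := by
      apply ODE_solution_unique_of_mem_Icc_left (s := fun _ => (univ : Set ℝ)) (fun t _ => hvlip t)
      · exact hgcont.mono (Icc_subset_Icc le_rfl hs.2)
      · intro t ht
        have htI : t ∈ Icc t0 T := ⟨ht.1.le, ht.2.trans hs.2⟩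
        have hd := hgderiv t htI
        have hmemnhds : Icc t0 T ∈ nhdsWithin t (Iic t) := by
          apply mem_nhdsWithin.2 ⟨Ioi t0, isOpen_Ioi, ht.1, ?_⟩
          rintro x ⟨hx1, hx2⟩
          exact ⟨le_of_lt hx1, le_trans hx2 htI.2⟩
        have := hd.mono_of_mem_nhdsWithin hmemnhds
        simpa only [hv, hcid t htI] using this
      · intro t ht; trivial
      · exact continuousOn_const
      · intro t ht
        simpa [hv] using (hasDerivWithinAt_const t (Iic t) (0 : ℝ))
      · intro t ht; trivial
      · exact hgs
    exact h0 (key ⟨le_rfl, hs.1⟩)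
  -- sign constancy via IVT
  have hpos : 0 < g t0 → ∀ t ∈ Icc t0 T, 0 < g t := by
    intro h0 t ht
    rcases lt_trichotomy (g t) 0 with hneg | hzero | hpos
    · exfalso
      have : (0 : ℝ) ∈ Icc (g t) (g t0) := ⟨hneg.le, h0.le⟩
      obtain ⟨u, hu, hu0⟩ := intermediate_value_Icc' ht.1
        (hgcont.mono (Icc_subset_Icc le_rfl ht.2)) this
      exact hnz (ne_of_gt h0) u ⟨hu.1, hu.2.trans ht.2⟩ hu0
    · exact absurd hzero (hnz (ne_of_gt h0) t ht)
    · exact hpos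
  have hneg : g t0 < 0 → ∀ t ∈ Icc t0 T, g t < 0 := by
    intro h0 t ht
    rcases lt_trichotomy (g t) 0 with hneg | hzero | hpos
    · exact hneg
    · exact absurd hzero (hnz (ne_of_lt h0) t ht)
    · exfalso
      have : (0 : ℝ) ∈ Icc (g t0) (g t) := ⟨h0.le, hpos.le⟩
      obtain ⟨u, hu, hu0⟩ := intermediate_value_Icc ht.1
        (hgcont.mono (Icc_subset_Icc le_rfl ht.2)) this
      exact hnz (ne_of_lt h0) u ⟨hu.1, hu.2.trans ht.2⟩ hu0
  -- derivative at interior points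
  have hderiv : ∀ x ∈ interior (Icc t0 T), deriv y x = g x := by
    intro x hx
    rw [interior_Icc] at hx
    have : HasDerivAt y (g x) x :=
      (hy x (Ioo_subset_Icc_self hx)).hasDerivAt (Icc_mem_nhds hx.1 hx.2)
    exact this.deriv
  constructor
  · intro h0
    apply strictMonoOn_of_deriv_pos (convex_Icc t0 T) hycont
    intro x hx
    rw [hderiv x hx]
    rw [interior_Icc] at hx
    exact hpos h0 x (Ioo_subset_Icc_self hx)
  · intro h0
    apply strictAntiOn_of_deriv_neg (convex_Icc t0 T) hycont
    intro x hx
    rw [hderiv x hx]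
    rw [interior_Icc] at hx
    exact hneg h0 x (Ioo_subset_Icc_self hx)
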